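/- Let X be a real Banach space and let A, B : X →L[ℝ] X be bounded linear operators that commute (A ∘ B = B ∘ A). Then there exists a constant C ≥ 0 such that for all τ ∈ [0, 1], ‖τ·φ₁(τ·(A+B)) − τ·exp((τ/2)·A) ∘ φ₁(τ·B) − (τ³/24)·(A ∘ A + 2·(B ∘ A))‖ ≤ C·τ⁴. -/

import Mathlib

open MeasureTheory intervalIntegral
open scoped Nat

set_option maxHeartbeats 2000000
set_option synthInstance.maxHeartbeats 1000000

/-- The operator `φ_ℓ(T) = ∑_{k=0}^∞ T^k / (ℓ+k)!` (for `ℓ = 0` this is `exp T`). -/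
noncomputable def phi {X : Type*} [NormedAddCommGroup X] [NormedSpace ℝ X] [CompleteSpace X]
    (ℓ : ℕ) (T : X →L[ℝ] X) : X →L[ℝ] X :=
  ∑' k : ℕ, (((ℓ + k)! : ℝ)⁻¹) • T ^ k

section Aux

variable {X : Type*} [NormedAddCommGroup X] [NormedSpace ℝ X] [CompleteSpace X]

lemma aux_norm_pow (P : X →L[ℝ] X) (j : ℕ) : ‖P ^ j‖ ≤ ‖P‖ ^ j := by
  induction j with
  | zero => rw [pow_zero, pow_zero]; exact ContinuousLinearMap.norm_id_le
  | succ n ih => rw [pow_succ, pow_succ]; exact le_trans (norm_mul_le _ _) (by gcongr)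

lemma aux_norm_smul (c : ℝ) (T : X →L[ℝ] X) : ‖c • T‖ = ‖c‖ * ‖T‖ := norm_smul c T

lemma aux_summable {u : ℕ → ℝ} (c : ℝ)
    (h1 : ∀ j, 0 ≤ u j) (h2 : ∀ j, u j ≤ c ^ j / j !) : Summable u :=
  Summable.of_nonneg_of_le h1 h2 (Real.summable_pow_div_factorial c)

end Aux

theorem stmt8 {X : Type*} [NormedAddCommGroup X] [NormedSpace ℝ X] [CompleteSpace X]
    (A B : X →L[ℝ] X) (hcomm : A.comp B = B.comp A) :
    ∃ C : ℝ, 0 ≤ C ∧ ∀ τ ∈ Set.Icc (0:ℝ) 1,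
      ‖τ • phi 1 (τ • (A + B)) - τ • (NormedSpace.exp ((τ/2) • A)).comp (phi 1 (τ • B))
        - (τ^3/24) • (A.comp A + (2:ℝ) • B.comp A)‖ ≤ C * τ^4 := by
  classical
  set a := ‖A‖ with ha
  set b := ‖B‖ with hb
  have ha0 : 0 ≤ a := norm_nonneg _
  have hb0 : 0 ≤ b := norm_nonneg _
  -- coefficient sequences
  set F : ℕ → (X →L[ℝ] X) := fun j => (((j+1)! : ℝ)⁻¹) • (A + B) ^ j with hF
  set f : ℕ → (X →L[ℝ] X) := fun m => (((m ! : ℝ))⁻¹ * (2:ℝ)⁻¹ ^ m) • A ^ m with hf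
  set g : ℕ → (X →L[ℝ] X) := fun n => (((n+1)! : ℝ)⁻¹) • B ^ n with hg
  set G : ℕ → (X →L[ℝ] X) := fun j => ∑ kl ∈ Finset.HasAntidiagonal.antidiagonal j, f kl.1 * g kl.2 with hG
  set E : ℕ → (X →L[ℝ] X) := fun j => F j - G j with hE
  -- norm bounds on the coefficients
  have hFb : ∀ j, ‖F j‖ ≤ (a + b) ^ j / j ! := by
    intro j
    simp only [hF]; rw [aux_norm_smul]
    calc ‖(((j+1)! : ℝ)⁻¹)‖ * ‖(A + B) ^ j‖
        ≤ ((j ! : ℝ))⁻¹ * (a + b) ^ j := by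
          apply mul_le_mul
          · rw [Real.norm_eq_abs, abs_of_nonneg (by positivity)]
            apply inv_anti₀ (by positivity)
            exact_mod_cast Nat.factorial_le (Nat.le_succ j)
          · exact le_trans (aux_norm_pow _ _) (by gcongr; exact norm_add_le _ _)
          · exact norm_nonneg _
          · positivity
      _ = (a + b) ^ j / j ! := by ring
  have hfb : ∀ m, ‖f m‖ ≤ (a / 2) ^ m / m ! := by
    intro m
    simp only [hf]; rw [aux_norm_smul]
    calc ‖((m ! : ℝ))⁻¹ * (2:ℝ)⁻¹ ^ m‖ * ‖A ^ m‖
        ≤ (((m !: ℝ))⁻¹ * (2:ℝ)⁻¹ ^ m) * a ^ m := by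
          apply mul_le_mul
          · rw [Real.norm_eq_abs, abs_of_nonneg (by positivity)]
          · exact aux_norm_pow _ _
          · exact norm_nonneg _
          · positivity
      _ = (a / 2) ^ m / m ! := by rw [div_pow, div_eq_mul_inv _ ((2:ℝ)^m), ← inv_pow]; ring
  have hgb : ∀ n, ‖g n‖ ≤ b ^ n / n ! := by
    intro n
    simp only [hg]; rw [aux_norm_smul]
    calc ‖(((n+1)! : ℝ)⁻¹)‖ * ‖B ^ n‖
        ≤ ((n ! : ℝ))⁻¹ * b ^ n := by
          apply mul_le_mul
          · rw [Real.norm_eq_abs, abs_of_nonneg (by positivity)]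
            apply inv_anti₀ (by positivity)
            exact_mod_cast Nat.factorial_le (Nat.le_succ n)
          · exact aux_norm_pow _ _
          · exact norm_nonneg _
          · positivity
      _ = b ^ n / n ! := by ring
  have hFsum : Summable fun j => ‖F j‖ :=
    aux_summable (a + b) (fun j => norm_nonneg _) hFb
  have hfsum : Summable fun m => ‖f m‖ :=
    aux_summable (a / 2) (fun m => norm_nonneg _) hfb
  have hgsum : Summable fun n => ‖g n‖ :=
    aux_summable b (fun n => norm_nonneg _) hgb
  have hGsum : Summable fun j => ‖G j‖ :=
    summable_norm_sum_mul_antidiagonal_of_summable_norm hfsum hgsum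
  have hEsum : Summable fun j => ‖E j‖ := by
    apply Summable.of_nonneg_of_le (fun j => norm_nonneg _) (fun j => norm_sub_le _ _)
    exact hFsum.add hGsum
  -- the constant
  refine ⟨∑' j, ‖E (j + 3)‖, tsum_nonneg fun j => norm_nonneg _, ?_⟩
  rintro τ ⟨hτ0, hτ1⟩
  have habs : |τ| ≤ 1 := by rwa [abs_of_nonneg hτ0]
  -- summability of the τ-weighted sequences
  have hhsum : Summable fun j => τ ^ (j+1) • E j := by
    apply Summable.of_norm
    apply Summable.of_nonneg_of_le (fun j => norm_nonneg _) _ hEsum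
    intro j
    rw [aux_norm_smul]
    calc ‖τ ^ (j+1)‖ * ‖E j‖ ≤ 1 * ‖E j‖ := by
          apply mul_le_mul_of_nonneg_right _ (norm_nonneg _)
          rw [Real.norm_eq_abs, abs_pow]
          exact pow_le_one₀ (abs_nonneg _) habs
      _ = ‖E j‖ := one_mul _
  have hτfnorm : Summable fun m => ‖τ ^ m • f m‖ := by
    apply Summable.of_nonneg_of_le (fun m => norm_nonneg _) _ hfsum
    intro m
    rw [aux_norm_smul]
    calc ‖τ ^ m‖ * ‖f m‖ ≤ 1 * ‖f m‖ := by
          apply mul_le_mul_of_nonneg_right _ (norm_nonneg _)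
          rw [Real.norm_eq_abs, abs_pow]
          exact pow_le_one₀ (abs_nonneg _) habs
      _ = ‖f m‖ := one_mul _
  have hτgnorm : Summable fun n => ‖τ ^ n • g n‖ := by
    apply Summable.of_nonneg_of_le (fun n => norm_nonneg _) _ hgsum
    intro n
    rw [aux_norm_smul]
    calc ‖τ ^ n‖ * ‖g n‖ ≤ 1 * ‖g n‖ := by
          apply mul_le_mul_of_nonneg_right _ (norm_nonneg _)
          rw [Real.norm_eq_abs, abs_pow]
          exact pow_le_one₀ (abs_nonneg _) habs
      _ = ‖g n‖ := one_mul _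
  have hτFsum : Summable fun j => τ ^ (j+1) • F j := by
    apply Summable.of_norm
    apply Summable.of_nonneg_of_le (fun j => norm_nonneg _) _ hFsum
    intro j
    rw [aux_norm_smul]
    calc ‖τ ^ (j+1)‖ * ‖F j‖ ≤ 1 * ‖F j‖ := by
          apply mul_le_mul_of_nonneg_right _ (norm_nonneg _)
          rw [Real.norm_eq_abs, abs_pow]
          exact pow_le_one₀ (abs_nonneg _) habs
      _ = ‖F j‖ := one_mul _
  have hτGsum : Summable fun j => τ ^ (j+1) • G j := by
    apply Summable.of_norm
    apply Summable.of_nonneg_of_le (fun j => norm_nonneg _) _ hGsum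
    intro j
    rw [aux_norm_smul]
    calc ‖τ ^ (j+1)‖ * ‖G j‖ ≤ 1 * ‖G j‖ := by
          apply mul_le_mul_of_nonneg_right _ (norm_nonneg _)
          rw [Real.norm_eq_abs, abs_pow]
          exact pow_le_one₀ (abs_nonneg _) habs
      _ = ‖G j‖ := one_mul _
  -- first term as a power series
  have h1 : τ • phi 1 (τ • (A + B)) = ∑' j, τ ^ (j+1) • F j := by
    rw [phi, ← tsum_const_smul'' τ]
    refine tsum_congr fun k => ?_
    simp only [hF, smul_pow, smul_smul]
    congr 1
    rw [Nat.add_comm 1 k]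
    ring
  -- second term as a power series
  have hexp : NormedSpace.exp ((τ/2) • A) = ∑' m, τ ^ m • f m := by
    rw [NormedSpace.exp_eq_tsum (𝕂 := ℝ)]
    refine tsum_congr fun m => ?_
    simp only [hf, smul_pow, smul_smul]
    congr 1
    rw [div_pow]
    field_simp
    rw [mul_assoc, ← mul_pow]; norm_num
  have hphiB : phi 1 (τ • B) = ∑' n, τ ^ n • g n := by
    rw [phi]
    refine tsum_congr fun n => ?_
    simp only [hg, smul_pow, smul_smul]
    congr 1
    rw [Nat.add_comm 1 n]
    ring
  have h2 : τ • (NormedSpace.exp ((τ/2) • A)).comp (phi 1 (τ • B))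
      = ∑' j, τ ^ (j+1) • G j := by
    rw [← ContinuousLinearMap.mul_def, hexp, hphiB,
      tsum_mul_tsum_eq_tsum_sum_antidiagonal_of_summable_norm hτfnorm hτgnorm,
      ← tsum_const_smul'' τ]
    refine tsum_congr fun j => ?_
    simp only [hG]
    rw [Finset.smul_sum, Finset.smul_sum]
    refine Finset.sum_congr rfl fun kl hkl => ?_
    rw [smul_mul_smul_comm, ← pow_add, Finset.HasAntidiagonal.mem_antidiagonal.mp hkl, smul_smul,
      ← pow_succ']
  -- the difference
  have hdiff : τ • phi 1 (τ • (A + B))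
      - τ • (NormedSpace.exp ((τ/2) • A)).comp (phi 1 (τ • B))
      = ∑' j, τ ^ (j+1) • E j := by
    rw [h1, h2, ← Summable.tsum_sub hτFsum hτGsum]
    exact tsum_congr fun j => (smul_sub _ _ _).symm
  -- low-order coefficients
  have hAB : A * B = B * A := by
    rw [ContinuousLinearMap.mul_def, ContinuousLinearMap.mul_def]; exact hcomm
  have hE0 : E 0 = 0 := by
    simp [hE, hF, hG, hf, hg, Finset.Nat.antidiagonal_zero]
  have hE1 : E 1 = 0 := by
    simp only [hE, hF, hG]
    rw [show Finset.HasAntidiagonal.antidiagonal 1 = {(0,1),(1,0)} by decide]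
    simp [hf, hg, Nat.factorial]
    module
  have hE2 : E 2 = (24:ℝ)⁻¹ • (A.comp A + (2:ℝ) • B.comp A) := by
    simp only [hE, hF, hG, hf, hg]
    rw [Finset.Nat.sum_antidiagonal_eq_sum_range_succ_mk]
    have hsq : (A + B) ^ 2 = A * A + (A * B + (B * A + B * B)) := by
      rw [sq, add_mul, mul_add, mul_add]; abel
    rw [← ContinuousLinearMap.mul_def A A, ← ContinuousLinearMap.mul_def B A]
    rw [Finset.sum_range_succ, Finset.sum_range_succ, Finset.sum_range_succ,
      Finset.sum_range_zero]
    rw [hsq, hAB]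
    norm_num [Nat.factorial]
    simp only [pow_two, hAB]
    module
  -- peel off the first three terms
  have hpeel : (∑' j, τ ^ (j+1) • E j) - (τ^3/24) • (A.comp A + (2:ℝ) • B.comp A)
      = ∑' j, τ ^ (j+4) • E (j+3) := by
    rw [Summable.tsum_eq_zero_add hhsum,
      Summable.tsum_eq_zero_add ((summable_nat_add_iff 1).mpr hhsum),
      Summable.tsum_eq_zero_add ((summable_nat_add_iff 2).mpr hhsum)]
    have e0 : τ ^ (0+1) • E 0 = 0 := by rw [hE0, smul_zero]
    have e1 : τ ^ (0+1+1) • E (0+1) = 0 := by rw [show (0+1:ℕ)=1 from rfl, hE1, smul_zero]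
    have e2 : τ ^ (0+1+1+1) • E (0+1+1) = (τ^3/24) • (A.comp A + (2:ℝ) • B.comp A) := by
      rw [show (0+1+1:ℕ)=2 from rfl, hE2, smul_smul,
        show τ^(0+1+1+1) * (24:ℝ)⁻¹ = τ^3/24 by ring]
    rw [e0, e1, e2]
    have : ∀ j : ℕ, j + 1 + 1 + 1 + 1 = j + 4 := by omega
    simp only [this]
    abel
  -- conclude
  rw [hdiff, hpeel]
  have hnorm : ‖∑' j, τ ^ (j+4) • E (j+3)‖ ≤ ∑' j, ‖τ ^ (j+4) • E (j+3)‖ := by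
    apply norm_tsum_le_tsum_norm
    apply Summable.of_nonneg_of_le (fun j => norm_nonneg _) _
      ((summable_nat_add_iff 3).mpr hEsum)
    intro j
    rw [aux_norm_smul]
    calc ‖τ ^ (j+4)‖ * ‖E (j+3)‖ ≤ 1 * ‖E (j+3)‖ := by
          apply mul_le_mul_of_nonneg_right _ (norm_nonneg _)
          rw [Real.norm_eq_abs, abs_pow]
          exact pow_le_one₀ (abs_nonneg _) habs
      _ = ‖E (j+3)‖ := one_mul _
  refine le_trans hnorm ?_
  have hterm : ∀ j, ‖τ ^ (j+4) • E (j+3)‖ ≤ ‖E (j+3)‖ * τ^4 := by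
    intro j
    rw [aux_norm_smul, Real.norm_eq_abs, abs_pow, abs_of_nonneg hτ0]
    rw [show j + 4 = 4 + j from by omega, pow_add]
    calc τ ^ 4 * τ ^ j * ‖E (j+3)‖ ≤ τ ^ 4 * 1 * ‖E (j+3)‖ := by
          gcongr
          exact pow_le_one₀ hτ0 hτ1
      _ = ‖E (j+3)‖ * τ^4 := by ring
  calc (∑' j, ‖τ ^ (j+4) • E (j+3)‖) ≤ ∑' j, ‖E (j+3)‖ * τ^4 := by
        apply Summable.tsum_le_tsum hterm
        · apply Summable.of_nonneg_of_le (fun j => norm_nonneg _) hterm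
          exact ((summable_nat_add_iff 3).mpr hEsum).mul_right _
        · exact ((summable_nat_add_iff 3).mpr hEsum).mul_right _
    _ = (∑' j, ‖E (j+3)‖) * τ^4 := tsum_mul_right
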